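/- For all λ ≥ 0, δ > 0 and k ∈ ℕ with b = k·δ, the digitisation error satisfies 1 − e^{-λ b}·(1 + λδ)^k ≤ (λ²·δ·b)/2. -/

import Mathlib

lemma exp_aux (x : ℝ) (hx : 0 ≤ x) : 1 - Real.exp (-x) * (1 + x) ≤ x ^ 2 / 2 := by
  set f : ℝ → ℝ := fun y => Real.exp (-y) * (1 + y) - 1 + y ^ 2 / 2 with hf
  have hderiv : ∀ y : ℝ, HasDerivAt f (y - Real.exp (-y) * y) y := by
    intro y
    have h1 : HasDerivAt (fun y : ℝ => Real.exp (-y)) (-Real.exp (-y)) y := by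
      simpa using ((hasDerivAt_id' y).neg).exp
    have h2 : HasDerivAt (fun y : ℝ => (1 : ℝ) + y) 1 y := by
      simpa using (hasDerivAt_id y).const_add 1
    have h3 := (h1.mul h2)
    have h4 : HasDerivAt (fun y : ℝ => y ^ 2 / 2) y y := by
      have := (hasDerivAt_pow 2 y).div_const 2
      simpa using this
    have := (h3.sub_const 1).add h4
    exact this.congr_deriv (by ring)
  have hmono : MonotoneOn f (Set.Ici (0:ℝ)) := by
    apply monotoneOn_of_deriv_nonneg (convex_Ici 0)
    · exact Continuous.continuousOn (by continuity)
    · intro y hy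
      exact (hderiv y).differentiableAt.differentiableWithinAt
    · intro y hy
      rw [(hderiv y).deriv]
      simp only [interior_Ici, Set.mem_Ioi] at hy
      have h1 : Real.exp (-y) ≤ 1 := Real.exp_le_one_iff.mpr (by linarith)
      nlinarith [hy, mul_le_of_le_one_left hy.le h1]
  have h0 : f 0 ≤ f x := hmono (by simp) (by simpa using hx) hx
  simp only [hf] at h0
  norm_num at h0
  linarith

lemma pow_aux (a : ℝ) (ha : 0 ≤ a) (ha1 : a ≤ 1) (k : ℕ) :
    1 - a ^ k ≤ k * (1 - a) := by
  induction k with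
  | zero => simp
  | succ n ih =>
    have hpow : a ^ n ≤ 1 := pow_le_one₀ ha ha1
    have hpow' : 0 ≤ a ^ n := pow_nonneg ha n
    push_cast
    rw [pow_succ]
    nlinarith

theorem digitisation_error_bound (lam δ b : ℝ) (hlam : 0 ≤ lam) (hδ : 0 < δ)
    (k : ℕ) (hb : b = k * δ) :
    1 - Real.exp (-lam * b) * (1 + lam * δ) ^ k ≤ lam ^ 2 * δ * b / 2 := by
  have hxnn : 0 ≤ lam * δ := mul_nonneg hlam hδ.le
  set a : ℝ := Real.exp (-(lam * δ)) * (1 + lam * δ) with hadef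
  have ha0 : 0 ≤ a := mul_nonneg (Real.exp_pos _).le (by linarith)
  have ha1 : a ≤ 1 := by
    have := Real.add_one_le_exp (lam * δ)
    have h := Real.add_one_le_exp (lam * δ)
    have h2 : Real.exp (-(lam * δ)) * (1 + lam * δ)
        ≤ Real.exp (-(lam * δ)) * Real.exp (lam * δ) :=
      mul_le_mul_of_nonneg_left (by linarith) (Real.exp_pos _).le
    rw [← Real.exp_add] at h2
    simpa [hadef] using h2
  have hrw : Real.exp (-lam * b) * (1 + lam * δ) ^ k = a ^ k := by
    rw [hadef, mul_pow, ← Real.exp_nat_mul, hb]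
    ring_nf
  rw [hrw]
  have h1 : 1 - a ^ k ≤ k * (1 - a) := pow_aux a ha0 ha1 k
  have h2 : 1 - a ≤ (lam * δ) ^ 2 / 2 := exp_aux (lam * δ) hxnn
  have hk : (0:ℝ) ≤ k := Nat.cast_nonneg k
  have h3 : (k:ℝ) * (1 - a) ≤ (k:ℝ) * ((lam * δ) ^ 2 / 2) := by
    exact mul_le_mul_of_nonneg_left h2 hk
  calc 1 - a ^ k ≤ (k:ℝ) * ((lam * δ) ^ 2 / 2) := le_trans h1 h3
    _ = lam ^ 2 * δ * b / 2 := by rw [hb]; ring
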